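/- Let (X, 𝒳, μ, T) be an ergodic measure preserving system where X = Z is a compact abelian group, T is an ergodic rotation x ↦ x+α, and let f ∈ L^∞(m) be nonnegative with ∫ f dm > 0. Then ∬_{Z×Z} f(s) f(s+t) f(s+2t) dm(s) dm(t) > 0. -/

import Mathlib

open MeasureTheory Filter Topology Function

/-- On a compact abelian group `Z` with Haar probability measure `m`, carrying
an ergodic rotation `x ↦ x + α`, if `f` is a bounded measurable nonnegative
function with positive integral then
`∬ f(s) f(s+t) f(s+2t) dm(s) dm(t) > 0`. -/
theorem triple_correlation_positive
    {Z : Type*} [AddCommGroup Z] [TopologicalSpace Z] [IsTopologicalAddGroup Z]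
    [CompactSpace Z] [MeasurableSpace Z] [BorelSpace Z]
    (m : Measure Z) [m.IsAddHaarMeasure] [IsProbabilityMeasure m]
    (α : Z) (hrot : Ergodic (fun x => x + α) m)
    (f : Z → ℝ) (hf : Measurable f) (hfbdd : ∃ C : ℝ, ∀ x, |f x| ≤ C)
    (hfnonneg : ∀ x, 0 ≤ f x) (hfint : 0 < ∫ x, f x ∂m) :
    0 < ∫ t, ∫ s, f s * f (s + t) * f (s + 2 • t) ∂m ∂m := by
  obtain ⟨C, hC⟩ := hfbdd
  have hC0 : 0 ≤ C := le_trans (abs_nonneg _) (hC 0)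
  simp only [two_nsmul]
  set g : Z → ℝ := fun t => ∫ s, f s * f (s + t) * f (s + (t + t)) ∂m with hg
  -- integrability of inner integrands
  have hmeas : ∀ t : Z, Measurable fun s => f s * f (s + t) * f (s + (t + t)) := fun t =>
    (hf.mul (hf.comp (measurable_id.add_const t))).mul
      (hf.comp (measurable_id.add_const (t + t)))
  have hint : ∀ t : Z, Integrable (fun s => f s * f (s + t) * f (s + (t + t))) m := by
    intro t
    refine Integrable.mono' (integrable_const (C * C * C))
      (hmeas t).aestronglyMeasurable (ae_of_all _ fun s => ?_)
    calc ‖f s * f (s + t) * f (s + (t + t))‖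
        = |f s| * |f (s + t)| * |f (s + (t + t))| := by
          simp [Real.norm_eq_abs, abs_mul]
      _ ≤ C * C * C :=
          mul_le_mul (mul_le_mul (hC _) (hC _) (abs_nonneg _) hC0) (hC _) (abs_nonneg _)
            (by positivity)
  -- g 0 = ∫ f^3 > 0
  have hsupp : 0 < m (support f) := by
    rw [← integral_pos_iff_support_of_nonneg hfnonneg]
    · exact hfint
    · exact Integrable.mono' (integrable_const C) hf.aestronglyMeasurable
        (ae_of_all _ fun x => by simpa using hC x)
  have hg0 : 0 < g 0 := by
    have : g 0 = ∫ s, f s * f s * f s ∂m := by simp [hg]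
    rw [this, integral_pos_iff_support_of_nonneg
        (fun s => by have := hfnonneg s; positivity) (by simpa using hint 0)]
    convert hsupp using 2
    ext x
    simp only [mem_support, Ne, mul_self_eq_zero]
    constructor
    · intro h hx; exact h (by rw [hx]; ring)
    · intro h hx
      rcases mul_eq_zero.1 hx with h1 | h2
      · exact h (mul_self_eq_zero.1 h1)
      · exact h h2
  -- Lp translation machinery
  have hmem : MemLp f 1 m := MemLp.of_bound hf.aestronglyMeasurable C
    (ae_of_all _ fun x => by simpa using hC x)
  set fL : Lp ℝ 1 m := hmem.toLp f with hfL
  have hTm : ∀ t : Z, MeasurePreserving (fun x : Z => x + t) m m := fun t =>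
    measurePreserving_add_right m t
  set T : Z → C(Z, Z) := fun t => ⟨fun x => x + t, by continuity⟩ with hT
  have hTcont : Continuous T := by
    apply ContinuousMap.continuous_of_continuous_uncurry
    exact continuous_snd.add continuous_fst
  set Φ : Z → Lp ℝ 1 m := fun t => Lp.compMeasurePreserving (T t) (hTm t) fL with hΦ
  have hΦcont : Continuous Φ :=
    Continuous.compMeasurePreservingLp continuous_const hTcont hTm ENNReal.one_ne_top
  have hΦae : ∀ t : Z, (Φ t : Z → ℝ) =ᵐ[m] fun s => f (s + t) := by
    intro t
    refine (Lp.coeFn_compMeasurePreserving fL (hTm t)).trans ?_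
    have : (fL : Z → ℝ) =ᵐ[m] f := MemLp.coeFn_toLp hmem
    exact (hTm t).quasiMeasurePreserving.ae_eq this
  -- norm of difference as integral
  have hnorm : ∀ t u : Z, ∫ s, |f (s + t) - f (s + u)| ∂m = ‖Φ t - Φ u‖ := by
    intro t u
    rw [L1.norm_eq_integral_norm]
    refine integral_congr_ae ?_
    filter_upwards [Lp.coeFn_sub (Φ t) (Φ u), hΦae t, hΦae u] with s h1 h2 h3
    rw [Real.norm_eq_abs, h1]
    simp only [Pi.sub_apply, h2, h3]
  have habs_int : ∀ t u : Z, Integrable (fun s => |f (s + t) - f (s + u)|) m := by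
    intro t u
    refine Integrable.mono' (integrable_const (C + C))
      ((hf.comp (measurable_id.add_const t)).sub
        (hf.comp (measurable_id.add_const u))).abs.aestronglyMeasurable
      (ae_of_all _ fun s => ?_)
    rw [Real.norm_eq_abs, abs_abs]
    calc |f (s + t) - f (s + u)| ≤ |f (s + t)| + |f (s + u)| := abs_sub _ _
      _ ≤ C + C := add_le_add (hC _) (hC _)
  -- key estimate
  have hkey : ∀ t u : Z,
      |g t - g u| ≤ C * C * ‖Φ t - Φ u‖ + C * C * ‖Φ (t + t) - Φ (u + u)‖ := by
    intro t u
    have hdiff : g t - g u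
        = ∫ s, (f s * f (s + t) * f (s + (t + t)) - f s * f (s + u) * f (s + (u + u))) ∂m := by
      rw [hg, ← integral_sub (hint t) (hint u)]
    rw [hdiff, ← hnorm t u, ← hnorm (t + t) (u + u)]
    calc |∫ s, (f s * f (s + t) * f (s + (t + t)) - f s * f (s + u) * f (s + (u + u))) ∂m|
        ≤ ∫ s, |f s * f (s + t) * f (s + (t + t)) - f s * f (s + u) * f (s + (u + u))| ∂m := by
          simpa [Real.norm_eq_abs] using norm_integral_le_integral_norm (μ := m)
            (fun s => f s * f (s + t) * f (s + (t + t)) - f s * f (s + u) * f (s + (u + u)))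
      _ ≤ ∫ s, (C * C * |f (s + t) - f (s + u)| + C * C * |f (s + (t + t)) - f (s + (u + u))|) ∂m := by
          refine integral_mono ((hint t).sub (hint u)).abs
            (((habs_int t u).const_mul _).add ((habs_int (t + t) (u + u)).const_mul _)) fun s => ?_
          have e : f s * f (s + t) * f (s + (t + t)) - f s * f (s + u) * f (s + (u + u))
              = f s * (f (s + t) - f (s + u)) * f (s + (t + t))
                + f s * f (s + u) * (f (s + (t + t)) - f (s + (u + u))) := by ring
          rw [e]
          have h1 : |f s * (f (s + t) - f (s + u)) * f (s + (t + t))|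
              ≤ C * C * |f (s + t) - f (s + u)| := by
            rw [abs_mul, abs_mul]
            calc |f s| * |f (s + t) - f (s + u)| * |f (s + (t + t))|
                ≤ C * |f (s + t) - f (s + u)| * C := by gcongr <;> exact hC _
              _ = C * C * |f (s + t) - f (s + u)| := by ring
          have h2 : |f s * f (s + u) * (f (s + (t + t)) - f (s + (u + u)))|
              ≤ C * C * |f (s + (t + t)) - f (s + (u + u))| := by
            rw [abs_mul, abs_mul]
            gcongr <;> exact hC _
          calc |f s * (f (s + t) - f (s + u)) * f (s + (t + t))
                + f s * f (s + u) * (f (s + (t + t)) - f (s + (u + u)))|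
              ≤ |f s * (f (s + t) - f (s + u)) * f (s + (t + t))|
                + |f s * f (s + u) * (f (s + (t + t)) - f (s + (u + u)))| := abs_add_le _ _
            _ ≤ _ := add_le_add h1 h2
      _ = C * C * (∫ s, |f (s + t) - f (s + u)| ∂m)
          + C * C * (∫ s, |f (s + (t + t)) - f (s + (u + u))| ∂m) := by
          rw [integral_add ((habs_int t u).const_mul _)
            ((habs_int (t + t) (u + u)).const_mul _), integral_const_mul, integral_const_mul]
  -- continuity of g
  have hgcontinuous : Continuous g := by
    rw [continuous_iff_continuousAt]
    intro u
    rw [ContinuousAt, tendsto_iff_dist_tendsto_zero]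
    simp only [Real.dist_eq]
    have h1 : Tendsto (fun t : Z => ‖Φ t - Φ u‖) (𝓝 u) (𝓝 0) := by
      have := ((hΦcont.sub (continuous_const (y := Φ u))).norm).tendsto u
      simpa using this
    have h2 : Tendsto (fun t : Z => ‖Φ (t + t) - Φ (u + u)‖) (𝓝 u) (𝓝 0) := by
      have hc : Tendsto (fun t : Z => t + t) (𝓝 u) (𝓝 (u + u)) :=
        (continuous_id.add continuous_id).tendsto u
      have := ((hΦcont.sub (continuous_const (y := Φ (u + u)))).norm).tendsto (u + u)
      simpa [Function.comp_def] using this.comp hc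
    have hbound : Tendsto (fun t => C * C * ‖Φ t - Φ u‖ + C * C * ‖Φ (t + t) - Φ (u + u)‖)
        (𝓝 u) (𝓝 0) := by
      simpa using (h1.const_mul (C * C)).add (h2.const_mul (C * C))
    exact squeeze_zero (fun t => abs_nonneg _) (fun t => hkey t u) hbound
  have hev : ∀ᶠ t in 𝓝 (0 : Z), g 0 / 2 < g t :=
    (hgcontinuous.tendsto 0).eventually (eventually_gt_nhds (by linarith))
  obtain ⟨U, hUsub, hUopen, hU0⟩ := eventually_nhds_iff.mp hev
  have hgnonneg : ∀ t, 0 ≤ g t := fun t =>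
    integral_nonneg fun s => by
      have a1 := hfnonneg s; have a2 := hfnonneg (s + t); have a3 := hfnonneg (s + (t + t))
      positivity
  have hgint : Integrable g m := by
    refine Integrable.mono' (integrable_const (C * C * C))
      hgcontinuous.stronglyMeasurable.aestronglyMeasurable (ae_of_all _ fun t => ?_)
    calc ‖g t‖ ≤ ∫ s, ‖f s * f (s + t) * f (s + (t + t))‖ ∂m :=
          norm_integral_le_integral_norm _
      _ ≤ ∫ _s, (C * C * C) ∂m := by
          refine integral_mono (hint t).norm (integrable_const _) fun s => ?_
          calc ‖f s * f (s + t) * f (s + (t + t))‖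
              = |f s| * |f (s + t)| * |f (s + (t + t))| := by
                simp [Real.norm_eq_abs, abs_mul]
            _ ≤ C * C * C :=
                mul_le_mul (mul_le_mul (hC _) (hC _) (abs_nonneg _) hC0) (hC _)
                  (abs_nonneg _) (by positivity)
      _ = C * C * C := by simp
  have hUm : 0 < m U := hUopen.measure_pos m ⟨0, hU0⟩
  have hUr : 0 < (m U).toReal := ENNReal.toReal_pos hUm.ne' (measure_ne_top m U)
  have hlow : g 0 / 2 * (m U).toReal ≤ ∫ t in U, g t ∂m := by
    have h := setIntegral_ge_of_const_le hUopen.measurableSet (measure_ne_top m U)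
      (fun t ht => (hUsub t ht).le) hgint.integrableOn
    rw [smul_eq_mul, mul_comm] at h
    exact h
  have hfull : ∫ t in U, g t ∂m ≤ ∫ t, g t ∂m :=
    setIntegral_le_integral hgint (ae_of_all _ hgnonneg)
  have hpos : 0 < g 0 / 2 * (m U).toReal := by positivity
  have : 0 < ∫ t, g t ∂m := by linarith
  exact this
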